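/- Let ζ be a 2-Killing vector field on a warped product M₁ ×_f M₂ such that λf² − 2ζ₁(f²) is nowhere zero. Then (M₂, g₂, ζ₂, λ, μ) is a hyperbolic Yamabe soliton if and only if £_{ζ₂}g₂ = [((μ − r₂)f² + ζ₁(ζ₁(f²)))/(λf² − 2ζ₁(f²))] g₂, where r₂ is the scalar curvature of (M₂, g₂). -/

import Mathlib

/-- For a 2-Killing vector field `ζ = ζ₁ + ζ₂` on a warped product
`M₁ ×_f M₂` (with `F = f² > 0`) such that `λF - 2ζ₁(F)` is nowhere zero,
`(M₂, g₂, ζ₂, λ, μ)` is a hyperbolic Yamabe soliton iff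
`£_{ζ₂}g₂ = [((μ - r₂)F + ζ₁(ζ₁(F)))/(λF - 2ζ₁(F))] g₂`. -/
theorem stmt_15
    {M₁ M₂ E₂ : Type*}
    [AddCommGroup E₂] [Module ℝ E₂] [Nonempty M₁] [Nonempty M₂]
    (g2 L2 LL2 : M₂ → E₂) (r2 : M₂ → ℝ)
    (F ζ1F ζ1ζ1F : M₁ → ℝ)
    (lam mu : ℝ)
    (hFpos : ∀ x, 0 < F x)
    -- λf² - 2ζ₁(f²) is nowhere zero
    (hden : ∀ x, lam * F x - 2 * ζ1F x ≠ 0)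
    -- 2-Killing condition, M₂-component
    (h2K : ∀ (x : M₁) (y : M₂),
      F x • LL2 y + (2 * ζ1F x) • L2 y + ζ1ζ1F x • g2 y = 0) :
    (∀ y, LL2 y + lam • L2 y = (mu - r2 y) • g2 y)
      ↔ ∀ (x : M₁) (y : M₂),
          L2 y = (((mu - r2 y) * F x + ζ1ζ1F x) / (lam * F x - 2 * ζ1F x)) • g2 y := by
  constructor
  · intro hs x y
    have hD := hden x
    have h1 := h2K x y
    have h3 : LL2 y = (mu - r2 y) • g2 y - lam • L2 y := eq_sub_of_add_eq (hs y)
    rw [h3] at h1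
    have key : (lam * F x - 2 * ζ1F x) • L2 y
        = ((mu - r2 y) * F x + ζ1ζ1F x) • g2 y := by
      linear_combination (norm := module) (-1 : ℝ) • h1
    calc L2 y = ((lam * F x - 2 * ζ1F x)⁻¹ * (lam * F x - 2 * ζ1F x)) • L2 y := by
          rw [inv_mul_cancel₀ hD, one_smul]
      _ = (lam * F x - 2 * ζ1F x)⁻¹ • ((lam * F x - 2 * ζ1F x) • L2 y) := by
          rw [smul_smul]
      _ = (lam * F x - 2 * ζ1F x)⁻¹ • (((mu - r2 y) * F x + ζ1ζ1F x) • g2 y) := by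
          rw [key]
      _ = (((mu - r2 y) * F x + ζ1ζ1F x) / (lam * F x - 2 * ζ1F x)) • g2 y := by
          rw [smul_smul, inv_mul_eq_div]
  · intro h y
    obtain x := Classical.arbitrary M₁
    have hF := (hFpos x).ne'
    have hD := hden x
    set c : ℝ := ((mu - r2 y) * F x + ζ1ζ1F x) / (lam * F x - 2 * ζ1F x) with hc
    have hL : L2 y = c • g2 y := h x y
    have h1 := h2K x y
    rw [hL] at h1 ⊢
    have hLL : LL2 y = ((F x)⁻¹ * (-(2 * ζ1F x * c + ζ1ζ1F x))) • g2 y := by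
      have key : F x • LL2 y = (-(2 * ζ1F x * c + ζ1ζ1F x)) • g2 y := by
        linear_combination (norm := module) h1
      calc LL2 y = ((F x)⁻¹ * F x) • LL2 y := by rw [inv_mul_cancel₀ hF, one_smul]
        _ = (F x)⁻¹ • (F x • LL2 y) := by rw [smul_smul]
        _ = ((F x)⁻¹ * (-(2 * ζ1F x * c + ζ1ζ1F x))) • g2 y := by rw [key, smul_smul]
    rw [hLL, smul_smul, ← add_smul]
    congr 1
    rw [hc]
    field_simp
    linear_combination (F x * mu - F x * r2 y + ζ1ζ1F x) * mul_inv_cancel₀ hD
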